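/- Let c = c^cr = 1/(4 log 2) and c₁ = c/2 = 1/(8 log 2). The uniform distribution π(v) = 1/N² is stationary for the Markov chain with transition matrix P (i.e. π·P = π), and there exists N₀ such that for every integer N ≥ N₀ and every integer k ≥ 2, max_{u ∈ V_N} ‖P^k(u,·) − π(·)‖_TV ≤ (1 − c₁)^{k/2 − 1}. -/

import Mathlib

open scoped BigOperators

/-- Vertices of the discrete 2-dimensional torus. -/
abbrev Vtx (N : ℕ) : Type := ZMod N × ZMod N

/-- `ρ_N(i)`: for a residue represented in `{0,…,N−1}`, `ρ_N(i) = i` if `i ≤ N/2`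
and `ρ_N(i) = N − i` otherwise. -/
def rhoN (N : ℕ) (i : ZMod N) : ℕ :=
  if 2 * i.val ≤ N then i.val else N - i.val

/-- Torus distance `ρ(u,v) = ρ_N(u₁ − v₁) + ρ_N(u₂ − v₂)`. -/
def torusDist (N : ℕ) (u v : Vtx N) : ℕ :=
  rhoN N (u.1 - v.1) + rhoN N (u.2 - v.2)

/-- Connection probability `p(u,v) = min(c/(N·ρ(u,v)), 1)` for `u ≠ v`, `p(u,u) = 0`. -/
noncomputable def edgeProb (N : ℕ) (c : ℝ) (u v : Vtx N) : ℝ :=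
  if u = v then 0 else min (c / ((N : ℝ) * (torusDist N u v : ℝ))) 1

/-- The critical value `c^cr = 1/(4 log 2)`. -/
noncomputable def ccr : ℝ := 1 / (4 * Real.log 2)

/-- Transition matrix `P(u,v) = p(u,v)/Z_N` for `u ≠ v`, `P(u,u) = 0`, where
`Z_N = Σ_{w ≠ u} p(u,w)` (this holds automatically since `p(u,u) = 0`). -/
noncomputable def transP (N : ℕ) [NeZero N] (c : ℝ) (u v : Vtx N) : ℝ :=
  edgeProb N c u v / ∑ w : Vtx N, edgeProb N c u w

/-- `k`-step transition probabilities `P^k(u,v)`. -/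
noncomputable def transPk (N : ℕ) [NeZero N] (c : ℝ) : ℕ → Vtx N → Vtx N → ℝ
  | 0, u, v => if u = v then 1 else 0
  | k + 1, u, v => ∑ x : Vtx N, transPk N c k u x * transP N c x v


open Finset

lemma rhoN_neg (N : ℕ) [NeZero N] (i : ZMod N) : rhoN N (-i) = rhoN N i := by
  unfold rhoN
  rcases eq_or_ne i 0 with h | h
  · simp [h]
  · have hv : (-i).val = N - i.val := by rw [ZMod.neg_val]; simp [h]
    have h1 : 0 < i.val := by
      have h2 := (ZMod.val_eq_zero i).not.mpr h
      omega
    have h3 : i.val < N := ZMod.val_lt i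
    rw [hv]; split_ifs <;> omega

lemma rhoN_eq_zero (N : ℕ) [NeZero N] (i : ZMod N) (h : rhoN N i = 0) : i = 0 := by
  have h3 : i.val < N := ZMod.val_lt i
  rw [← ZMod.val_eq_zero]
  unfold rhoN at h; split_ifs at h <;> omega

lemma rhoN_zero (N : ℕ) [NeZero N] : rhoN N 0 = 0 := by
  unfold rhoN; simp

lemma two_rhoN_le (N : ℕ) [NeZero N] (i : ZMod N) : 2 * rhoN N i ≤ N := by
  have h3 : i.val < N := ZMod.val_lt i
  unfold rhoN; split_ifs <;> omega

lemma torusDist_symm (N : ℕ) [NeZero N] (u v : Vtx N) :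
    torusDist N u v = torusDist N v u := by
  unfold torusDist
  rw [← rhoN_neg N (v.1 - u.1), ← rhoN_neg N (v.2 - u.2), neg_sub, neg_sub]

lemma torusDist_le (N : ℕ) [NeZero N] (u v : Vtx N) : torusDist N u v ≤ N := by
  have h1 := two_rhoN_le N (u.1 - v.1)
  have h2 := two_rhoN_le N (u.2 - v.2)
  unfold torusDist; omega

lemma torusDist_pos (N : ℕ) [NeZero N] {u v : Vtx N} (h : u ≠ v) :
    1 ≤ torusDist N u v := by
  rcases Nat.eq_zero_or_pos (torusDist N u v) with h0 | h0
  · exfalso; apply h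
    unfold torusDist at h0
    have h1 : u.1 - v.1 = 0 := rhoN_eq_zero N _ (by omega)
    have h2 : u.2 - v.2 = 0 := rhoN_eq_zero N _ (by omega)
    have : u.1 = v.1 := by rwa [sub_eq_zero] at h1
    have : u.2 = v.2 := by rwa [sub_eq_zero] at h2
    exact Prod.ext ‹u.1 = v.1› ‹u.2 = v.2›
  · exact h0

lemma ccr_pos : 0 < ccr := by
  unfold ccr; positivity

lemma ccr_lt : ccr < 0.37 := by
  unfold ccr
  rw [div_lt_iff₀ (by positivity)]
  nlinarith [Real.log_two_gt_d9]

lemma ccr_le_one : ccr ≤ 1 := by nlinarith [ccr_lt, ccr_pos]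

lemma rhoN_flag_inj (N : ℕ) [NeZero N] (i j : ZMod N) (h1 : rhoN N i = rhoN N j)
    (h2 : (2 * i.val ≤ N) ↔ (2 * j.val ≤ N)) : i = j := by
  have hi : i.val < N := ZMod.val_lt i
  have hj : j.val < N := ZMod.val_lt j
  apply ZMod.val_injective
  unfold rhoN at h1
  split_ifs at h1 <;> omega

lemma card_fiber_le (N : ℕ) [NeZero N] (u : Vtx N) (r : ℕ) :
    ((Finset.univ.filter (fun w : Vtx N => torusDist N u w = r)).card : ℝ) ≤ 4 * (r + 1) := by
  have h : (Finset.univ.filter (fun w : Vtx N => torusDist N u w = r)).card ≤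
      ((Finset.univ : Finset (Bool × Bool)) ×ˢ Finset.range (r + 1)).card := by
    apply Finset.card_le_card_of_injOn
      (fun w => ((decide (2 * (u.1 - w.1).val ≤ N), decide (2 * (u.2 - w.2).val ≤ N)),
        rhoN N (u.1 - w.1)))
    · intro w hw
      simp only [Finset.mem_coe, Finset.mem_filter, Finset.mem_univ, true_and] at hw
      simp only [Finset.mem_coe, Finset.mem_product, Finset.mem_univ, true_and, Finset.mem_range]
      unfold torusDist at hw
      omega
    · intro w1 hw1 w2 hw2 heq
      simp only [Finset.mem_coe, Finset.mem_filter, Finset.mem_univ, true_and] at hw1 hw2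
      simp only [Prod.mk.injEq] at heq
      obtain ⟨⟨hf1, hf2⟩, hr1⟩ := heq
      rw [decide_eq_decide] at hf1 hf2
      have e1 : u.1 - w1.1 = u.1 - w2.1 := rhoN_flag_inj N _ _ hr1 hf1
      have hr2 : rhoN N (u.2 - w1.2) = rhoN N (u.2 - w2.2) := by
        unfold torusDist at hw1 hw2; omega
      have e2 : u.2 - w1.2 = u.2 - w2.2 := rhoN_flag_inj N _ _ hr2 hf2
      have : w1.1 = w2.1 := by
        have h' := congrArg (fun x => u.1 - x) (sub_right_injective e1)
        simpa using sub_right_injective e1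
      have : w1.2 = w2.2 := by
        simpa using sub_right_injective e2
      exact Prod.ext ‹w1.1 = w2.1› ‹w1.2 = w2.2›
  have hcard : ((Finset.univ : Finset (Bool × Bool)) ×ˢ Finset.range (r + 1)).card
      = 4 * (r + 1) := by
    simp [Finset.card_product]
  rw [hcard] at h
  exact_mod_cast h

lemma harmonic_le (n : ℕ) :
    ∑ r ∈ Finset.range n, (1 : ℝ) / (r + 1) ≤ 1 + Real.log n := by
  induction n with
  | zero => simp
  | succ n ih =>
    rcases Nat.eq_zero_or_pos n with h0 | h0
    · subst h0; simp
    · rw [Finset.sum_range_succ]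
      have hn : (0 : ℝ) < n := by exact_mod_cast h0
      have key : (1 : ℝ) / (n + 1) ≤ Real.log (n + 1) - Real.log n := by
        have h1 := Real.log_le_sub_one_of_pos (x := (n : ℝ) / (n + 1)) (by positivity)
        rw [Real.log_div (by positivity) (by positivity)] at h1
        have : (n : ℝ) / (n + 1) - 1 = -(1 / (n + 1)) := by field_simp; ring
        rw [this] at h1
        linarith
      push_cast
      linarith

lemma Z_le (N : ℕ) [NeZero N] (hN : 1000 ≤ N) (u : Vtx N) :
    ∑ w : Vtx N, edgeProb N ccr u w ≤ 1.8 := by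
  have hN0 : (0 : ℝ) < N := by positivity
  -- step 1: bound by g
  set g : Vtx N → ℝ := fun w => if u = w then 0 else ccr / ((N : ℝ) * (torusDist N u w)) with hg
  have step1 : ∑ w : Vtx N, edgeProb N ccr u w ≤ ∑ w : Vtx N, g w := by
    apply Finset.sum_le_sum
    intro w _
    unfold edgeProb
    by_cases h : u = w
    · simp [h, hg]
    · simp only [h, if_false, hg]
      exact min_le_left _ _
  -- step 2: fiberwise
  have step2 : ∑ w : Vtx N, g w =
      ∑ r ∈ Finset.range (N + 1),
        ∑ w ∈ Finset.univ.filter (fun w : Vtx N => torusDist N u w = r), g w := by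
    rw [Finset.sum_fiberwise_of_maps_to]
    intro w _
    simp only [Finset.mem_range]
    exact Nat.lt_succ_of_le (torusDist_le N u w)
  -- step 3: inner bound
  have step3 : ∀ r ∈ Finset.range (N + 1),
      ∑ w ∈ Finset.univ.filter (fun w : Vtx N => torusDist N u w = r), g w ≤
        (if r = 0 then 0 else 4 * ((r : ℝ) + 1) * (ccr / ((N : ℝ) * r))) := by
    intro r _
    by_cases hr : r = 0
    · subst hr
      simp only [if_true]
      apply le_of_eq
      apply Finset.sum_eq_zero
      intro w hw
      simp only [Finset.mem_filter] at hw
      have : u = w := by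
        by_contra hne
        have := torusDist_pos N hne
        omega
      simp [hg, this]
    · simp only [hr, if_false]
      have heach : ∀ w ∈ Finset.univ.filter (fun w : Vtx N => torusDist N u w = r),
          g w = ccr / ((N : ℝ) * r) := by
        intro w hw
        simp only [Finset.mem_filter] at hw
        have hne : u ≠ w := by
          intro h; subst h
          apply hr
          have h0 : torusDist N u u = 0 := by
            unfold torusDist; simp [rhoN_zero]
          omega
        simp [hg, hne, hw.2]
      rw [Finset.sum_congr rfl heach, Finset.sum_const, nsmul_eq_mul]
      have := card_fiber_le N u r
      have hrpos : (0:ℝ) < r := by exact_mod_cast Nat.pos_of_ne_zero hr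
      have hpos : 0 ≤ ccr / ((N : ℝ) * r) :=
        div_nonneg (le_of_lt ccr_pos) (by positivity)
      calc ((Finset.univ.filter (fun w : Vtx N => torusDist N u w = r)).card : ℝ)
            * (ccr / ((N : ℝ) * r)) ≤ (4 * ((r:ℝ) + 1)) * (ccr / ((N : ℝ) * r)) := by
              exact mul_le_mul_of_nonneg_right this hpos
        _ = 4 * ((r : ℝ) + 1) * (ccr / ((N : ℝ) * r)) := by ring
  -- step 4: sum the bound
  have step4 : ∑ r ∈ Finset.range (N + 1),
      (if r = 0 then 0 else 4 * ((r : ℝ) + 1) * (ccr / ((N : ℝ) * r))) ≤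
      (4 * ccr / N) * (N + (1 + Real.log N)) := by
    rw [Finset.sum_range_succ']
    have hterm : ∀ r ∈ Finset.range N,
        (if r + 1 = 0 then (0:ℝ) else 4 * (((r+1 : ℕ) : ℝ) + 1) * (ccr / ((N : ℝ) * ((r+1 : ℕ) : ℝ))))
        = (4 * ccr / N) * (1 + 1 / ((r : ℝ) + 1)) := by
      intro r _
      rw [if_neg (Nat.succ_ne_zero _)]
      have h1 : ((r : ℝ) + 1) ≠ 0 := by positivity
      have h2 : (N : ℝ) ≠ 0 := ne_of_gt hN0
      push_cast
      field_simp
    rw [Finset.sum_congr rfl hterm, if_pos rfl, add_zero, ← Finset.mul_sum]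
    have hsum : ∑ r ∈ Finset.range N, (1 + 1 / ((r : ℝ) + 1)) =
        (N : ℝ) + ∑ r ∈ Finset.range N, 1 / ((r : ℝ) + 1) := by
      rw [Finset.sum_add_distrib]
      simp
    rw [hsum]
    have h1 := harmonic_le N
    have h2 : (0:ℝ) ≤ 4 * ccr / N := div_nonneg (by nlinarith [ccr_pos]) (le_of_lt hN0)
    nlinarith [ccr_pos]
  -- step 5: numerics
  have hlog : Real.log N ≤ 2 * Real.sqrt N - 2 := by
    have hs : Real.log (Real.sqrt N) = Real.log N / 2 := Real.log_sqrt (le_of_lt hN0)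
    have h2 := Real.log_le_sub_one_of_pos (x := Real.sqrt N) (Real.sqrt_pos.mpr hN0)
    rw [hs] at h2
    linarith
  have hsq : (31 : ℝ) ≤ Real.sqrt N := by
    rw [show (31:ℝ) = Real.sqrt 961 by
      rw [show (961:ℝ) = 31^2 by norm_num, Real.sqrt_sq (by norm_num)]]
    apply Real.sqrt_le_sqrt
    exact_mod_cast le_trans (by norm_num) hN
  have hss : Real.sqrt N * Real.sqrt N = N := Real.mul_self_sqrt (le_of_lt hN0)
  have hNr : (1000 : ℝ) ≤ N := by exact_mod_cast hN
  have final : (4 * ccr / N) * (N + (1 + Real.log N)) ≤ 1.8 := by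
    have hlogN : Real.log N ≤ 2 * Real.sqrt N := by linarith
    have hkey : (1 : ℝ) + Real.log N ≤ 0.07 * N := by
      nlinarith [hsq, hss, hlogN]
    rw [div_mul_eq_mul_div, div_le_iff₀ hN0]
    nlinarith [ccr_pos, ccr_lt, hkey]
  linarith [step1, step2 ▸ Finset.sum_le_sum step3, step4]

lemma edgeProb_nonneg (N : ℕ) (c : ℝ) (hc : 0 ≤ c) (u v : Vtx N) :
    0 ≤ edgeProb N c u v := by
  unfold edgeProb
  split_ifs
  · exact le_refl 0
  · exact le_min (div_nonneg hc (by positivity)) zero_le_one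
  
lemma edgeProb_symm (N : ℕ) [NeZero N] (c : ℝ) (u v : Vtx N) :
    edgeProb N c u v = edgeProb N c v u := by
  unfold edgeProb
  rw [torusDist_symm]
  by_cases h : u = v
  · simp [h]
  · rw [if_neg h, if_neg (Ne.symm h)]

lemma edgeProb_ge (N : ℕ) [NeZero N] (hN : 2 ≤ N) {u v : Vtx N} (h : u ≠ v) :
    ccr / (N : ℝ) ^ 2 ≤ edgeProb N ccr u v := by
  unfold edgeProb
  rw [if_neg h]
  have hd1 : (1 : ℝ) ≤ (torusDist N u v : ℝ) := by exact_mod_cast torusDist_pos N h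
  have hdN : (torusDist N u v : ℝ) ≤ N := by exact_mod_cast torusDist_le N u v
  have hN0 : (0 : ℝ) < N := by exact_mod_cast Nat.pos_of_ne_zero (NeZero.ne N)
  apply le_min
  · rw [div_le_div_iff₀ (by positivity) (by positivity)]
    nlinarith [mul_le_mul_of_nonneg_left hdN (le_of_lt (mul_pos ccr_pos hN0))]
  · rw [div_le_one (by positivity)]
    nlinarith [ccr_le_one, hN0, sq_nonneg ((N:ℝ) - 1)]

lemma edgeProb_le_div (N : ℕ) [NeZero N] {u v : Vtx N} (h : u ≠ v) :
    edgeProb N ccr u v ≤ ccr / ((N : ℝ) * (torusDist N u v : ℝ)) := by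
  unfold edgeProb; rw [if_neg h]; exact min_le_left _ _

lemma edgeProb_le (N : ℕ) [NeZero N] (u v : Vtx N) :
    edgeProb N ccr u v ≤ ccr / (N : ℝ) := by
  have hN0 : (0 : ℝ) < N := by exact_mod_cast Nat.pos_of_ne_zero (NeZero.ne N)
  by_cases h : u = v
  · unfold edgeProb; rw [if_pos h]
    exact div_nonneg (le_of_lt ccr_pos) (le_of_lt hN0)
  · refine le_trans (edgeProb_le_div N h) ?_
    have hd1 : (1 : ℝ) ≤ (torusDist N u v : ℝ) := by exact_mod_cast torusDist_pos N h
    have hρ : (0:ℝ) < (N:ℝ) * (torusDist N u v : ℝ) := by nlinarith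
    rw [div_le_div_iff₀ hρ hN0]
    nlinarith [mul_le_mul_of_nonneg_left hd1 (le_of_lt (mul_pos ccr_pos hN0))]

lemma Z_ge (N : ℕ) [NeZero N] (hN : 2 ≤ N) (u : Vtx N) :
    ccr / 2 ≤ ∑ w : Vtx N, edgeProb N ccr u w := by
  have hcard : (Finset.univ.erase u).card = N ^ 2 - 1 := by
    rw [Finset.card_erase_of_mem (Finset.mem_univ u), Finset.card_univ]
    simp [Fintype.card_prod, ZMod.card, sq]
  have h1 : ∑ w ∈ Finset.univ.erase u, (ccr / (N:ℝ)^2) ≤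
      ∑ w ∈ Finset.univ.erase u, edgeProb N ccr u w := by
    apply Finset.sum_le_sum
    intro w hw
    exact edgeProb_ge N hN (Ne.symm (Finset.ne_of_mem_erase hw))
  have h2 : ∑ w ∈ Finset.univ.erase u, edgeProb N ccr u w ≤
      ∑ w : Vtx N, edgeProb N ccr u w := by
    apply Finset.sum_le_sum_of_subset_of_nonneg (Finset.erase_subset _ _)
    intro w _ _
    exact edgeProb_nonneg N ccr (le_of_lt ccr_pos) u w
  rw [Finset.sum_const, hcard, nsmul_eq_mul] at h1
  have hN0 : (0 : ℝ) < N := by exact_mod_cast Nat.pos_of_ne_zero (NeZero.ne N)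
  have hc : ((N ^ 2 - 1 : ℕ) : ℝ) = (N:ℝ)^2 - 1 := by
    have : 1 ≤ N ^ 2 := by nlinarith
    push_cast [this]
    ring
  rw [hc] at h1
  have hN2 : (4 : ℝ) ≤ (N:ℝ)^2 := by
    have : (2:ℝ) ≤ N := by exact_mod_cast hN
    nlinarith
  have : ccr / 2 ≤ ((N:ℝ)^2 - 1) * (ccr / (N:ℝ)^2) := by
    rw [mul_div_assoc', le_div_iff₀ (by positivity)]
    nlinarith [ccr_pos]
  linarith

lemma Z_transl (N : ℕ) [NeZero N] (c : ℝ) (u v : Vtx N) :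
    ∑ w : Vtx N, edgeProb N c u w = ∑ w : Vtx N, edgeProb N c v w := by
  apply Fintype.sum_equiv (Equiv.addRight (v - u))
  intro w
  show edgeProb N c u w = edgeProb N c v (w + (v - u))
  have h1 : u.1 - w.1 = v.1 - (w + (v - u)).1 := by
    show u.1 - w.1 = v.1 - (w.1 + (v.1 - u.1))
    abel
  have h2 : u.2 - w.2 = v.2 - (w + (v - u)).2 := by
    show u.2 - w.2 = v.2 - (w.2 + (v.2 - u.2))
    abel
  have h3 : (u = w) ↔ (v = w + (v - u)) := by
    constructor
    · intro h; subst h; abel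
    · intro h
      have e1 : v - (v - u) = w + (v - u) - (v - u) := by rw [← h]
      have e2 : v - (v - u) = u := by abel
      have e3 : w + (v - u) - (v - u) = w := add_sub_cancel_right w (v - u)
      exact (e2.symm.trans e1).trans e3
  unfold edgeProb torusDist
  rw [← h1, ← h2]
  rcases eq_or_ne u w with h | h
  · rw [if_pos h, if_pos (h3.mp h)]
  · rw [if_neg h, if_neg (fun hh => h (h3.mpr hh))]

section
variable (N : ℕ) [NeZero N]

lemma Z_pos (hN : 2 ≤ N) (u : Vtx N) : 0 < ∑ w : Vtx N, edgeProb N ccr u w :=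
  lt_of_lt_of_le (by nlinarith [ccr_pos]) (Z_ge N hN u)

lemma transP_nonneg (hN : 2 ≤ N) (u v : Vtx N) : 0 ≤ transP N ccr u v :=
  div_nonneg (edgeProb_nonneg N ccr (le_of_lt ccr_pos) u v) (le_of_lt (Z_pos N hN u))

lemma transP_symm (hN : 2 ≤ N) (u v : Vtx N) : transP N ccr u v = transP N ccr v u := by
  unfold transP
  rw [edgeProb_symm, Z_transl N ccr u v]

lemma transP_row (hN : 2 ≤ N) (u : Vtx N) : ∑ v : Vtx N, transP N ccr u v = 1 := by
  unfold transP
  rw [← Finset.sum_div]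
  exact div_self (ne_of_gt (Z_pos N hN u))

lemma transP_col (hN : 2 ≤ N) (v : Vtx N) : ∑ u : Vtx N, transP N ccr u v = 1 := by
  rw [Finset.sum_congr rfl (fun u _ => transP_symm N hN u v)]
  exact transP_row N hN v

lemma transP_le (hN : 1000 ≤ N) (u v : Vtx N) :
    transP N ccr u v ≤ 2 / (N : ℝ) := by
  have hN2 : 2 ≤ N := by omega
  have hZ := Z_ge N hN2 u
  have hZ0 := Z_pos N hN2 u
  have hp := edgeProb_le N u v
  have hN0 : (0 : ℝ) < N := by exact_mod_cast Nat.pos_of_ne_zero (NeZero.ne N)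
  unfold transP
  rw [div_le_div_iff₀ hZ0 hN0]
  calc edgeProb N ccr u v * (N:ℝ) ≤ (ccr / N) * N := by nlinarith
    _ = ccr := by field_simp
    _ ≤ 2 * (ccr / 2) := by ring_nf; linarith
    _ ≤ 2 * ∑ w : Vtx N, edgeProb N ccr u w := by nlinarith

lemma transP_ge (hN : 1000 ≤ N) {u v : Vtx N} (h : u ≠ v) :
    (ccr / 1.8) / (N : ℝ) ^ 2 ≤ transP N ccr u v := by
  have hN2 : 2 ≤ N := by omega
  have hZle := Z_le N hN u
  have hZ0 := Z_pos N hN2 u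
  have hp := edgeProb_ge N hN2 h
  have hN0 : (0 : ℝ) < (N : ℝ)^2 := by
    have : (0:ℝ) < N := by exact_mod_cast Nat.pos_of_ne_zero (NeZero.ne N)
    positivity
  have h1 : (ccr/1.8)/(N:ℝ)^2 = (ccr/(N:ℝ)^2)/1.8 := by ring
  have ha : (0:ℝ) ≤ ccr/(N:ℝ)^2 := div_nonneg (le_of_lt ccr_pos) (le_of_lt hN0)
  rw [h1]
  unfold transP
  exact div_le_div₀ (le_trans ha hp) hp hZ0 hZle

-- minorization of the two-step kernel
lemma minorization (hN : 1000 ≤ N) (x v : Vtx N) :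
    (ccr / 2) * (1 / (N : ℝ) ^ 2) ≤ ∑ y : Vtx N, transP N ccr x y * transP N ccr y v := by
  have hN2 : 2 ≤ N := by omega
  have hN0 : (0 : ℝ) < N := by exact_mod_cast Nat.pos_of_ne_zero (NeZero.ne N)
  have hN0' : (0 : ℝ) < (N:ℝ)^2 := by positivity
  set m : ℝ := (ccr / 1.8) / (N : ℝ) ^ 2 with hm
  have hm0 : 0 ≤ m := div_nonneg (div_nonneg (le_of_lt ccr_pos) (by norm_num)) (le_of_lt hN0')
  have step1 : ∑ y ∈ Finset.univ.erase v, transP N ccr x y * transP N ccr y v ≤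
      ∑ y : Vtx N, transP N ccr x y * transP N ccr y v := by
    apply Finset.sum_le_sum_of_subset_of_nonneg (Finset.erase_subset _ _)
    intro y _ _
    exact mul_nonneg (transP_nonneg N hN2 x y) (transP_nonneg N hN2 y v)
  have step2 : ∑ y ∈ Finset.univ.erase v, transP N ccr x y * m ≤
      ∑ y ∈ Finset.univ.erase v, transP N ccr x y * transP N ccr y v := by
    apply Finset.sum_le_sum
    intro y hy
    exact mul_le_mul_of_nonneg_left (transP_ge N hN (Finset.ne_of_mem_erase hy))
      (transP_nonneg N hN2 x y)
  have step3 : ∑ y ∈ Finset.univ.erase v, transP N ccr x y * m =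
      (1 - transP N ccr x v) * m := by
    rw [← Finset.sum_mul, Finset.sum_erase_eq_sub (Finset.mem_univ v), transP_row N hN2 x]
  have step4 : (ccr / 2) * (1 / (N : ℝ) ^ 2) ≤ (1 - transP N ccr x v) * m := by
    have hle := transP_le N hN x v
    have h2N : (2 : ℝ) / N ≤ 0.002 := by
      rw [div_le_iff₀ hN0]
      have : (1000:ℝ) ≤ N := by exact_mod_cast hN
      nlinarith
    have h5 : 0.998 ≤ 1 - transP N ccr x v := by linarith
    have : (ccr / 2) * (1 / (N : ℝ) ^ 2) ≤ 0.998 * m := by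
      rw [hm, div_div]
      rw [show ccr / 2 * (1 / (N:ℝ)^2) = ccr / (2 * (N:ℝ)^2) by ring,
        show (0.998:ℝ) * (ccr / (1.8 * (N:ℝ)^2)) = (0.998 * ccr) / (1.8 * (N:ℝ)^2) by ring,
        div_le_div_iff₀ (by positivity) (by positivity)]
      nlinarith [ccr_pos, hN0']
    nlinarith [hm0]
  calc (ccr / 2) * (1 / (N : ℝ) ^ 2) ≤ (1 - transP N ccr x v) * m := step4
    _ = ∑ y ∈ Finset.univ.erase v, transP N ccr x y * m := step3.symm
    _ ≤ ∑ y ∈ Finset.univ.erase v, transP N ccr x y * transP N ccr y v := step2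
    _ ≤ ∑ y : Vtx N, transP N ccr x y * transP N ccr y v := step1

end

/-- Generic one–step TV contraction under a Doeblin minorization. -/
lemma contraction {ι : Type*} [Fintype ι] (Q : ι → ι → ℝ) (pi : ι → ℝ) (ε : ℝ)
    (hε0 : 0 ≤ ε)
    (hQ : ∀ x v, ε * pi v ≤ Q x v)
    (hrow : ∀ x, ∑ v, Q x v = 1)
    (hπQ : ∀ v, ∑ x, pi x * Q x v = pi v)
    (hπ1 : ∑ x, pi x = 1)
    (μ : ι → ℝ) (hμ1 : ∑ x, μ x = 1) :
    ∑ v, |(∑ x, μ x * Q x v) - pi v| ≤ (1 - ε) * ∑ x, |μ x - pi x| := by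
  have key : ∀ v, (∑ x, μ x * Q x v) - pi v = ∑ x, (μ x - pi x) * (Q x v - ε * pi v) := by
    intro v
    have h1 : ∑ x, (μ x - pi x) * (Q x v - ε * pi v)
        = ∑ x, (μ x * Q x v - pi x * Q x v - (μ x - pi x) * (ε * pi v)) := by
      apply Finset.sum_congr rfl; intro x _; ring
    rw [h1, Finset.sum_sub_distrib, Finset.sum_sub_distrib, ← Finset.sum_mul]
    rw [Finset.sum_sub_distrib, hμ1, hπ1, sub_self, zero_mul, sub_zero, hπQ]
  calc ∑ v, |(∑ x, μ x * Q x v) - pi v|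
      = ∑ v, |∑ x, (μ x - pi x) * (Q x v - ε * pi v)| := by
        apply Finset.sum_congr rfl; intro v _; rw [key]
    _ ≤ ∑ v, ∑ x, |μ x - pi x| * (Q x v - ε * pi v) := by
        apply Finset.sum_le_sum; intro v _
        refine le_trans (Finset.abs_sum_le_sum_abs _ _) ?_
        apply Finset.sum_le_sum; intro x _
        rw [abs_mul]
        have hnn : 0 ≤ Q x v - ε * pi v := by linarith [hQ x v]
        rw [abs_of_nonneg hnn]
    _ = ∑ x, |μ x - pi x| * ∑ v, (Q x v - ε * pi v) := by
        rw [Finset.sum_comm]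
        apply Finset.sum_congr rfl; intro x _
        rw [Finset.mul_sum]
    _ = (1 - ε) * ∑ x, |μ x - pi x| := by
        have : ∀ x : ι, ∑ v, (Q x v - ε * pi v) = 1 - ε := by
          intro x
          rw [Finset.sum_sub_distrib, hrow, ← Finset.mul_sum, hπ1, mul_one]
        rw [Finset.sum_congr rfl (fun x _ => by rw [this x]), ← Finset.sum_mul, mul_comm]

section
variable (N : ℕ) [NeZero N]

lemma pi_sum : ∑ _x : Vtx N, (1 / (N : ℝ) ^ 2) = 1 := by
  have hN0 : (0 : ℝ) < N := by exact_mod_cast Nat.pos_of_ne_zero (NeZero.ne N)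
  rw [Finset.sum_const, Finset.card_univ, nsmul_eq_mul]
  have : (Fintype.card (Vtx N) : ℝ) = (N : ℝ) ^ 2 := by
    simp [Fintype.card_prod, ZMod.card, sq]
  rw [this]
  field_simp

lemma transPk_nonneg (hN : 2 ≤ N) (k : ℕ) (u x : Vtx N) : 0 ≤ transPk N ccr k u x := by
  induction k generalizing x with
  | zero => unfold transPk; split_ifs <;> norm_num
  | succ k ih =>
    show (0:ℝ) ≤ ∑ y : Vtx N, transPk N ccr k u y * transP N ccr y x
    exact Finset.sum_nonneg fun y _ => mul_nonneg (ih y) (transP_nonneg N hN y x)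

lemma transPk_row (hN : 2 ≤ N) (k : ℕ) (u : Vtx N) :
    ∑ x : Vtx N, transPk N ccr k u x = 1 := by
  induction k with
  | zero =>
    show ∑ x : Vtx N, (if u = x then (1:ℝ) else 0) = 1
    simp
  | succ k ih =>
    show ∑ v : Vtx N, ∑ x : Vtx N, transPk N ccr k u x * transP N ccr x v = 1
    rw [Finset.sum_comm]
    calc ∑ x : Vtx N, ∑ v : Vtx N, transPk N ccr k u x * transP N ccr x v
        = ∑ x : Vtx N, transPk N ccr k u x * ∑ v : Vtx N, transP N ccr x v := by
          apply Finset.sum_congr rfl; intro x _; rw [Finset.mul_sum]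
      _ = ∑ x : Vtx N, transPk N ccr k u x := by
          apply Finset.sum_congr rfl; intro x _; rw [transP_row N hN x, mul_one]
      _ = 1 := ih

lemma transPk_step2 (k : ℕ) (u v : Vtx N) :
    transPk N ccr (k + 2) u v =
      ∑ x : Vtx N, transPk N ccr k u x * ∑ y : Vtx N, transP N ccr x y * transP N ccr y v := by
  show ∑ y : Vtx N, (∑ x : Vtx N, transPk N ccr k u x * transP N ccr x y) * transP N ccr y v = _
  calc ∑ y : Vtx N, (∑ x : Vtx N, transPk N ccr k u x * transP N ccr x y) * transP N ccr y v
      = ∑ y : Vtx N, ∑ x : Vtx N, transPk N ccr k u x * (transP N ccr x y * transP N ccr y v) := by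
        apply Finset.sum_congr rfl; intro y _
        rw [Finset.sum_mul]
        apply Finset.sum_congr rfl; intro x _; ring
    _ = ∑ x : Vtx N, ∑ y : Vtx N, transPk N ccr k u x * (transP N ccr x y * transP N ccr y v) :=
        Finset.sum_comm
    _ = ∑ x : Vtx N, transPk N ccr k u x * ∑ y : Vtx N, transP N ccr x y * transP N ccr y v := by
        apply Finset.sum_congr rfl; intro x _; rw [Finset.mul_sum]

end

section
variable (N : ℕ) [NeZero N]

lemma pi_stationary (hN : 2 ≤ N) (v : Vtx N) :
    ∑ x : Vtx N, (1 / (N : ℝ) ^ 2) * transP N ccr x v = 1 / (N : ℝ) ^ 2 := by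
  rw [← Finset.mul_sum, transP_col N hN v, mul_one]

lemma pi_stationary_Q (hN : 2 ≤ N) (v : Vtx N) :
    ∑ x : Vtx N, (1 / (N : ℝ) ^ 2) *
      (∑ y : Vtx N, transP N ccr x y * transP N ccr y v) = 1 / (N : ℝ) ^ 2 := by
  calc ∑ x : Vtx N, (1 / (N : ℝ) ^ 2) * ∑ y : Vtx N, transP N ccr x y * transP N ccr y v
      = ∑ x : Vtx N, ∑ y : Vtx N, ((1 / (N : ℝ) ^ 2) * transP N ccr x y) * transP N ccr y v := by
        apply Finset.sum_congr rfl; intro x _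
        rw [Finset.mul_sum]
        apply Finset.sum_congr rfl; intro y _; ring
    _ = ∑ y : Vtx N, (∑ x : Vtx N, (1 / (N : ℝ) ^ 2) * transP N ccr x y) * transP N ccr y v := by
        rw [Finset.sum_comm]
        apply Finset.sum_congr rfl; intro y _
        rw [Finset.sum_mul]
    _ = ∑ y : Vtx N, (1 / (N : ℝ) ^ 2) * transP N ccr y v := by
        apply Finset.sum_congr rfl; intro y _
        rw [pi_stationary N hN y]
    _ = 1 / (N : ℝ) ^ 2 := pi_stationary N hN v

lemma dist_le_two (hN : 2 ≤ N) (μ : Vtx N → ℝ) (hμ0 : ∀ x, 0 ≤ μ x)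
    (hμ1 : ∑ x : Vtx N, μ x = 1) :
    ∑ x : Vtx N, |μ x - 1 / (N : ℝ) ^ 2| ≤ 2 := by
  have hπ0 : (0:ℝ) ≤ 1 / (N : ℝ) ^ 2 := by positivity
  calc ∑ x : Vtx N, |μ x - 1 / (N : ℝ) ^ 2|
      ≤ ∑ x : Vtx N, (μ x + 1 / (N : ℝ) ^ 2) := by
        apply Finset.sum_le_sum; intro x _
        calc |μ x - 1 / (N : ℝ) ^ 2| ≤ |μ x| + |1 / (N : ℝ) ^ 2| := abs_sub _ _
          _ = μ x + 1 / (N : ℝ) ^ 2 := by rw [abs_of_nonneg (hμ0 x), abs_of_nonneg hπ0]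
    _ = 2 := by rw [Finset.sum_add_distrib, hμ1, pi_sum N]; norm_num

lemma main_induction (hN : 1000 ≤ N) (k : ℕ) (hk : 2 ≤ k) (u : Vtx N) :
    (1 / 2) * ∑ x : Vtx N, |transPk N ccr k u x - 1 / (N : ℝ) ^ 2| ≤
      (1 - ccr / 2) ^ ((k : ℝ) / 2 - 1) := by
  have hN2 : 2 ≤ N := by omega
  have hb0 : (0:ℝ) < 1 - ccr / 2 := by nlinarith [ccr_lt, ccr_pos]
  have hb1 : 1 - ccr / 2 ≤ 1 := by nlinarith [ccr_pos]
  -- the contraction step, packaged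
  have contract : ∀ m : ℕ, ∑ x : Vtx N, |transPk N ccr (m + 2) u x - 1 / (N : ℝ) ^ 2| ≤
      (1 - ccr / 2) * ∑ x : Vtx N, |transPk N ccr m u x - 1 / (N : ℝ) ^ 2| := by
    intro m
    have h := contraction (fun x v => ∑ y : Vtx N, transP N ccr x y * transP N ccr y v)
      (fun _ => 1 / (N : ℝ) ^ 2) (ccr / 2)
      (by nlinarith [ccr_pos])
      (fun x v => by
        have := minorization N hN x v
        calc ccr / 2 * (1 / (N : ℝ) ^ 2) ≤ _ := this)
      (fun x => by
        calc ∑ v : Vtx N, ∑ y : Vtx N, transP N ccr x y * transP N ccr y v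
            = ∑ y : Vtx N, ∑ v : Vtx N, transP N ccr x y * transP N ccr y v := Finset.sum_comm
          _ = ∑ y : Vtx N, transP N ccr x y * ∑ v : Vtx N, transP N ccr y v := by
              apply Finset.sum_congr rfl; intro y _; rw [Finset.mul_sum]
          _ = ∑ y : Vtx N, transP N ccr x y := by
              apply Finset.sum_congr rfl; intro y _; rw [transP_row N hN2 y, mul_one]
          _ = 1 := transP_row N hN2 x)
      (fun v => pi_stationary_Q N hN2 v)
      (pi_sum N)
      (transPk N ccr m u) (transPk_row N hN2 m u)
    calc ∑ x : Vtx N, |transPk N ccr (m + 2) u x - 1 / (N : ℝ) ^ 2|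
        = ∑ v : Vtx N, |(∑ x : Vtx N, transPk N ccr m u x *
            ∑ y : Vtx N, transP N ccr x y * transP N ccr y v) - 1 / (N : ℝ) ^ 2| := by
          apply Finset.sum_congr rfl; intro v _
          rw [transPk_step2]
      _ ≤ (1 - ccr / 2) * ∑ x : Vtx N, |transPk N ccr m u x - 1 / (N : ℝ) ^ 2| := h
  induction k using Nat.strong_induction_on with
  | _ k ih =>
    match k, hk with
    | 2, _ =>
      have h2 : ((2:ℕ) : ℝ) / 2 - 1 = 0 := by norm_num
      rw [h2, Real.rpow_zero]
      have := dist_le_two N hN2 (transPk N ccr 2 u) (transPk_nonneg N hN2 2 u)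
        (transPk_row N hN2 2 u)
      linarith
    | 3, _ =>
      have h1 := contract 1
      have hd1 := dist_le_two N hN2 (transPk N ccr 1 u) (transPk_nonneg N hN2 1 u)
        (transPk_row N hN2 1 u)
      have h3 : ((3:ℕ) : ℝ) / 2 - 1 = 1/2 := by norm_num
      rw [h3]
      have hr : (1 - ccr / 2) ≤ (1 - ccr / 2) ^ ((1:ℝ)/2) := by
        calc (1 - ccr / 2) = (1 - ccr / 2) ^ ((1:ℝ)) := (Real.rpow_one _).symm
          _ ≤ (1 - ccr / 2) ^ ((1:ℝ)/2) :=
            Real.rpow_le_rpow_of_exponent_ge hb0 hb1 (by norm_num)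
      have : (1/2 : ℝ) * ∑ x : Vtx N, |transPk N ccr 3 u x - 1 / (N : ℝ) ^ 2|
          ≤ (1 - ccr / 2) := by nlinarith
      linarith
    | (m + 4), _ =>
      have hm2 : 2 ≤ m + 2 := by omega
      have ihm := ih (m + 2) (by omega) hm2
      have hc := contract (m + 2)
      have hexp : ((m + 4 : ℕ) : ℝ) / 2 - 1 = (((m + 2 : ℕ) : ℝ) / 2 - 1) + 1 := by
        push_cast; ring
      rw [hexp, Real.rpow_add hb0, Real.rpow_one]
      have hpow : (0:ℝ) ≤ (1 - ccr / 2) ^ (((m + 2 : ℕ) : ℝ) / 2 - 1) :=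
        le_of_lt (Real.rpow_pos_of_pos hb0 _)
      nlinarith
end

/-- With `c = c^cr = 1/(4 log 2)` and `c₁ = c/2`: the uniform distribution
`π(v) = 1/N²` is stationary for the chain with transition matrix `P`, and there is `N₀`
such that for all `N ≥ N₀` and all `k ≥ 2`,
`max_u ‖P^k(u,·) − π‖_TV ≤ (1 − c₁)^{k/2 − 1}`. -/
theorem stmt10 :
    (∀ (N : ℕ) [NeZero N], 2 ≤ N → ∀ v : Vtx N,
      ∑ u : Vtx N, (1 / (N : ℝ) ^ 2) * transP N ccr u v = 1 / (N : ℝ) ^ 2) ∧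
    ∃ N₀ : ℕ, ∀ (N : ℕ) [NeZero N], N₀ ≤ N →
      ∀ k : ℕ, 2 ≤ k → ∀ u : Vtx N,
        (1 / 2) * ∑ x : Vtx N, |transPk N ccr k u x - 1 / (N : ℝ) ^ 2| ≤
          (1 - ccr / 2) ^ ((k : ℝ) / 2 - 1) := by
  constructor
  · intro N _ hN v
    exact pi_stationary N hN v
  · refine ⟨1000, ?_⟩
    intro N _ hN k hk u
    exact main_induction N hN k hk u
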